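/- Critical set of the four-dimensional galactic potential: Fix ω > 0 and ε > 0 and define U : ℝ⁴ → ℝ by U(x) = (ω²/2)(x₁² + x₂² + x₃² + x₄²) + (ε/2)( −(1/2)(x₁² + x₂²)² + (1/2)(x₁² + x₂²)²(x₃² + x₄²)⁴ ). Then ∇U(x) = 0 if and only if x = (0,0,0,0), or x₁² + x₂² = ω²/ε and x₃ = x₄ = 0. That is, the critical set of U is {0} ∪ { (x₁,x₂,0,0) : x₁² + x₂² = ω²/ε }. -/

import Mathlib

open InnerProductSpace


set_option maxHeartbeats 2000000 in
/-- **Critical set of the four-dimensional galactic potential.**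
Fix `ω > 0` and `ε > 0` and let
`U(x) = (ω²/2)‖x‖² + (ε/2)(−(1/2)(x₁²+x₂²)² + (1/2)(x₁²+x₂²)²(x₃²+x₄²)⁴)` on `ℝ⁴`.
Then `∇U(x) = 0` iff `x = 0`, or `x₁² + x₂² = ω²/ε` and `x₃ = x₄ = 0`. -/
theorem critical_set_four_dim_galactic_potential
    (ω ε : ℝ) (hω : 0 < ω) (hε : 0 < ε)
    (U : EuclideanSpace ℝ (Fin 4) → ℝ)
    (hU : ∀ x : EuclideanSpace ℝ (Fin 4),
      U x = ω ^ 2 / 2 * (x 0 ^ 2 + x 1 ^ 2 + x 2 ^ 2 + x 3 ^ 2) +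
        ε / 2 * (-(1 / 2 : ℝ) * (x 0 ^ 2 + x 1 ^ 2) ^ 2 +
          (1 / 2 : ℝ) * (x 0 ^ 2 + x 1 ^ 2) ^ 2 * (x 2 ^ 2 + x 3 ^ 2) ^ 4)) :
    ∀ x : EuclideanSpace ℝ (Fin 4),
      gradient U x = 0 ↔
        x = 0 ∨ (x 0 ^ 2 + x 1 ^ 2 = ω ^ 2 / ε ∧ x 2 = 0 ∧ x 3 = 0) := by
  intro x
  have hU' : U = fun x : EuclideanSpace ℝ (Fin 4) =>
      ω ^ 2 / 2 * (x 0 ^ 2 + x 1 ^ 2 + x 2 ^ 2 + x 3 ^ 2) +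
        ε / 2 * (-(1 / 2 : ℝ) * (x 0 ^ 2 + x 1 ^ 2) ^ 2 +
          (1 / 2 : ℝ) * (x 0 ^ 2 + x 1 ^ 2) ^ 2 * (x 2 ^ 2 + x 3 ^ 2) ^ 4) := funext hU
  set r := x 0 ^ 2 + x 1 ^ 2 with hr
  set s := x 2 ^ 2 + x 3 ^ 2 with hs
  set a0 := x 0 * (ω ^ 2 + ε * r * (s ^ 4 - 1)) with ha0
  set a1 := x 1 * (ω ^ 2 + ε * r * (s ^ 4 - 1)) with ha1
  set a2 := x 2 * (ω ^ 2 + 2 * ε * r ^ 2 * s ^ 3) with ha2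
  set a3 := x 3 * (ω ^ 2 + 2 * ε * r ^ 2 * s ^ 3) with ha3
  set g : EuclideanSpace ℝ (Fin 4) := (WithLp.equiv 2 (Fin 4 → ℝ)).symm ![a0, a1, a2, a3] with hg
  have hgrad : HasGradientAt U g x := by
    have hproj : ∀ i, HasFDerivAt (𝕜 := ℝ) (fun y : EuclideanSpace ℝ (Fin 4) => y i)
        (EuclideanSpace.proj i) x := fun i =>
      (EuclideanSpace.proj i : EuclideanSpace ℝ (Fin 4) →L[ℝ] ℝ).hasFDerivAt
    have hsq : ∀ i, HasFDerivAt (𝕜 := ℝ) (fun y : EuclideanSpace ℝ (Fin 4) => y i * y i)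
        ((x i • EuclideanSpace.proj i : _ →L[ℝ] ℝ) + x i • EuclideanSpace.proj i) x :=
      fun i => (hproj i).mul (hproj i)
    have h01 := (hsq 0).add (hsq 1)
    have h23 := (hsq 2).add (hsq 3)
    have hsum := ((hsq 0).add (hsq 1)).add ((hsq 2).add (hsq 3))
    have h01sq := h01.mul h01
    have h23sq := h23.mul h23
    have h23p4 := h23sq.mul h23sq
    have hbig := ((h01sq).const_mul (-(1/2 : ℝ))).add (((h01sq).const_mul ((1:ℝ)/2)).mul h23p4)
    have H := (hsum.const_mul (ω ^ 2 / 2)).add (hbig.const_mul (ε / 2))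
    have H' := H.congr_of_eventuallyEq (Filter.Eventually.of_forall (fun y => by ring :
      ∀ y : EuclideanSpace ℝ (Fin 4),
        ω ^ 2 / 2 * (y 0 ^ 2 + y 1 ^ 2 + y 2 ^ 2 + y 3 ^ 2) +
          ε / 2 * (-(1 / 2 : ℝ) * (y 0 ^ 2 + y 1 ^ 2) ^ 2 +
            (1 / 2 : ℝ) * (y 0 ^ 2 + y 1 ^ 2) ^ 2 * (y 2 ^ 2 + y 3 ^ 2) ^ 4) =
        ω ^ 2 / 2 * (y 0 * y 0 + y 1 * y 1 + (y 2 * y 2 + y 3 * y 3)) +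
          ε / 2 * (-(1 / 2 : ℝ) * ((y 0 * y 0 + y 1 * y 1) * (y 0 * y 0 + y 1 * y 1)) +
            (1 / 2 : ℝ) * ((y 0 * y 0 + y 1 * y 1) * (y 0 * y 0 + y 1 * y 1)) *
              ((y 2 * y 2 + y 3 * y 3) * (y 2 * y 2 + y 3 * y 3) *
                ((y 2 * y 2 + y 3 * y 3) * (y 2 * y 2 + y 3 * y 3))))))
    rw [hasGradientAt_iff_hasFDerivAt, hU']
    refine (H'.congr_fderiv ?_).congr_of_eventuallyEq
      (Filter.Eventually.of_forall (fun y => by ring))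
    ext v
    simp [hg, ContinuousLinearMap.add_apply, ContinuousLinearMap.smul_apply,
      PiLp.proj_apply, PiLp.inner_apply, Fin.sum_univ_four,
      PiLp.toLp_apply, ha0, ha1, ha2, ha3, hr, hs, smul_eq_mul]
    ring
  rw [hgrad.gradient]
  clear hgrad hU' hU
  have hs0 : 0 ≤ s := by nlinarith [sq_nonneg (x 2), sq_nonneg (x 3)]
  have hr0 : 0 ≤ r := by nlinarith [sq_nonneg (x 0), sq_nonneg (x 1)]
  have hzero : g = 0 ↔ a0 = 0 ∧ a1 = 0 ∧ a2 = 0 ∧ a3 = 0 := by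
    constructor
    · intro h
      refine ⟨?_, ?_, ?_, ?_⟩ <;>
        · have := congrFun (congrArg (WithLp.equiv 2 (Fin 4 → ℝ)) h)
          first
          | simpa [hg] using this 0
          | simpa [hg] using this 1
          | simpa [hg] using this 2
          | simpa [hg] using this 3
    · rintro ⟨h0, h1, h2, h3⟩
      ext i
      fin_cases i <;> simp [hg, h0, h1, h2, h3]
  rw [hzero]
  constructor
  · rintro ⟨h0, h1, h2, h3⟩
    have hpos : 0 < ω ^ 2 + 2 * ε * r ^ 2 * s ^ 3 := by
      have : 0 ≤ 2 * ε * r ^ 2 * s ^ 3 :=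
        mul_nonneg (by positivity) (pow_nonneg hs0 3)
      nlinarith [pow_pos hω 2]
    have hx2 : x 2 = 0 := by
      rcases mul_eq_zero.mp h2 with h | h
      · exact h
      · exact absurd h (ne_of_gt hpos)
    have hx3 : x 3 = 0 := by
      rcases mul_eq_zero.mp h3 with h | h
      · exact h
      · exact absurd h (ne_of_gt hpos)
    have hs' : s = 0 := by rw [hs, hx2, hx3]; ring
    rw [ha0, hs'] at h0
    rw [ha1, hs'] at h1
    by_cases hx01 : x 0 = 0 ∧ x 1 = 0
    · left
      ext i
      fin_cases i <;> simp [hx01.1, hx01.2, hx2, hx3]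
    · right
      refine ⟨?_, hx2, hx3⟩
      have hfac : ω ^ 2 + ε * r * ((0:ℝ) ^ 4 - 1) = 0 := by
        rcases not_and_or.mp hx01 with h | h
        · exact (mul_eq_zero.mp h0).resolve_left h
        · exact (mul_eq_zero.mp h1).resolve_left h
      have hεr : ε * r = ω ^ 2 := by nlinarith [hfac]
      field_simp
      linarith [hεr]
  · rintro (h | ⟨hrv, h2, h3⟩)
    · have hx : ∀ i, x i = 0 := by intro i; rw [h]; simp
      exact ⟨by rw [ha0, hx 0]; ring, by rw [ha1, hx 1]; ring,
        by rw [ha2, hx 2]; ring, by rw [ha3, hx 3]; ring⟩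
    · have hs' : s = 0 := by rw [hs, h2, h3]; ring
      have hfac : ω ^ 2 + ε * r * (s ^ 4 - 1) = 0 := by
        rw [hs', hrv]; field_simp; ring
      exact ⟨by rw [ha0, hfac]; ring, by rw [ha1, hfac]; ring,
        by rw [ha2, h2]; ring, by rw [ha3, h3]; ring⟩
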